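/- Let g skewer a half-space H⁺ of a CAT(0) cube complex (g·H⁺ ⊊ H⁺), and let v be any vertex. Then there exists k ≥ 1 such that gᵏ·v ∈ H⁺ and g⁻ᵏ·v ∈ H⁻, where H⁻ is the complementary half-space. -/

import Mathlib

open scoped Pointwise

private lemma smul_ssubset_smul {V G : Type*} [Group G] [MulAction G V]
    {s t : Set V} (a : G) (h : s ⊂ t) : a • s ⊂ a • t := by
  rw [Set.ssubset_iff_subset_ne] at h ⊢
  refine ⟨Set.smul_set_subset_smul_set_iff.mpr h.1, fun he => h.2 ?_⟩
  have := congrArg (fun u => a⁻¹ • u) he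
  simpa [smul_smul] using this

/-- Let `g` skewer a half-space `H⁺` of a CAT(0) cube complex
(`g • H⁺ ⊊ H⁺`) and let `v` be any vertex.  The cube complex is modeled by its vertex set
`V` with its complement-closed, `G`-invariant family `ℋ` of half-spaces, satisfying the
(local finiteness) property that only finitely many half-spaces separate any two vertices
(this encodes that combinatorial distance is finite and equals the number of separating
hyperplanes).  Then there exists `k ≥ 1` with `gᵏ • v ∈ H⁺` and `g⁻ᵏ • v ∈ H⁻ = (H⁺)ᶜ`. -/
theorem stmt13 {V : Type*} {G : Type*} [Group G] [MulAction G V]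
    (ℋ : Set (Set V))
    (hcompl : ∀ D ∈ ℋ, Dᶜ ∈ ℋ)
    (hfin : ∀ u w : V, {D | D ∈ ℋ ∧ u ∈ D ∧ w ∉ D}.Finite)
    (hinv : ∀ (g : G), ∀ D ∈ ℋ, g • D ∈ ℋ)
    (Hplus : Set V) (hH : Hplus ∈ ℋ)
    (hne : Hplus.Nonempty) (hne' : Hplusᶜ.Nonempty)
    (g : G) (hskew : g • Hplus ⊂ Hplus) (v : V) :
    ∃ k : ℕ, 1 ≤ k ∧ g ^ k • v ∈ Hplus ∧ (g ^ k)⁻¹ • v ∈ Hplusᶜ := by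
  classical
  set S : ℤ → Set V := fun n => (g ^ n) • Hplus with hSdef
  have hstep : ∀ n : ℤ, S (n + 1) ⊂ S n := by
    intro n
    have h1 : S (n + 1) = (g ^ n) • (g • Hplus) := by
      simp only [hSdef, zpow_add_one, mul_smul]
    rw [h1]
    exact smul_ssubset_smul _ hskew
  have hanti : StrictAnti S := strictAnti_int_of_succ_lt hstep
  have hmono : ∀ {a b : ℤ}, a ≤ b → S b ⊆ S a := fun h => hanti.antitone h
  have hSmem : ∀ n : ℤ, S n ∈ ℋ := fun n => hinv _ _ hH
  -- Case A: eventually v ∉ S k for k ≥ 1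
  have hA : ∃ k : ℕ, 1 ≤ k ∧ v ∉ S k := by
    by_contra hcon
    push_neg at hcon
    obtain ⟨w, hw1, hw2⟩ := Set.exists_of_ssubset hskew
    have hwS : ∀ n : ℕ, w ∉ S ((n : ℤ) + 1) := by
      intro n hwmem
      have : w ∈ S 1 := hmono (by omega) hwmem
      have : w ∈ g • Hplus := by simpa [hSdef] using this
      exact hw2 this
    have hinj : Function.Injective (fun n : ℕ => S ((n : ℤ) + 1)) := by
      intro a b hab
      have := hanti.injective hab
      omega
    have : {D | D ∈ ℋ ∧ v ∈ D ∧ w ∉ D}.Infinite :=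
      Set.infinite_of_injective_forall_mem hinj (fun n =>
        ⟨hSmem _, by simpa using hcon (n + 1) (by omega), hwS n⟩)
    exact this (hfin v w)
  -- Case B: eventually v ∈ S (-k) for k ≥ 1
  have hB : ∃ k : ℕ, 1 ≤ k ∧ v ∈ S (-(k : ℤ)) := by
    by_contra hcon
    push_neg at hcon
    obtain ⟨w, hw⟩ := hne
    have hwS : ∀ n : ℕ, w ∈ S (-((n : ℤ) + 1)) := by
      intro n
      exact hmono (by omega : -((n : ℤ) + 1) ≤ 0) (by simpa [hSdef] using hw)
    have hinj : Function.Injective (fun n : ℕ => S (-((n : ℤ) + 1))) := by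
      intro a b hab
      have := hanti.injective hab
      omega
    have : {D | D ∈ ℋ ∧ w ∈ D ∧ v ∉ D}.Infinite :=
      Set.infinite_of_injective_forall_mem hinj (fun n =>
        ⟨hSmem _, hwS n, by simpa using hcon (n + 1) (by omega)⟩)
    exact this (hfin w v)
  obtain ⟨k1, hk1, hv1⟩ := hA
  obtain ⟨k2, hk2, hv2⟩ := hB
  refine ⟨max k1 k2, le_trans hk1 (le_max_left _ _), ?_, ?_⟩
  · have hmem : v ∈ S (-(max k1 k2 : ℕ) : ℤ) := by
      refine hmono ?_ hv2
      have := le_max_right k1 k2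
      omega
    rw [hSdef] at hmem
    rw [Set.mem_smul_set_iff_inv_smul_mem] at hmem
    simpa [zpow_neg, ← Nat.cast_max, zpow_natCast] using hmem
  · have hnot : v ∉ S ((max k1 k2 : ℕ) : ℤ) := by
      intro hvmem
      exact hv1 (hmono (by exact_mod_cast le_max_left k1 k2) hvmem)
    have hnot' : v ∉ g ^ (k1 ⊔ k2) • Hplus := by
      simpa [hSdef, ← Nat.cast_max, zpow_natCast] using hnot
    intro hmem
    exact hnot' (Set.mem_smul_set_iff_inv_smul_mem.mpr hmem)
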